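/- Let N ≥ 4, let ε > 0, let π = (π_ij) be a symmetric trace-free real (N−1)×(N−1) matrix, and let a₁, a₂ ∈ ℝ. Then the function Φ(x) = ε π_ij x_i x_j (|x̄|² + (x_N+1)²)^{−N/2} [ ((N−2)/2)(x_N − 1) + a₁(x_N+1)/(|x̄|² + (x_N+1)²)² + a₂/(|x̄|² + (x_N+1)²) ] satisfies −ΔΦ(x) = 2ε π_ij x_N ∂²W_{1,0}/∂x_i∂x_j (x) for all x ∈ ℝ^N_+. -/

import Mathlib

open MeasureTheory Filter Topology

noncomputable section

/-- The model for `ℝ^N_+`: pairs `(x̄, t)` with `x̄ ∈ ℝ^n` (Euclidean) and `t ∈ ℝ`;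
the open upper half-space is `{p | 0 < p.2}`. -/
abbrev HSp (n : ℕ) := EuclideanSpace ℝ (Fin n) × ℝ

/-- The open upper half-space. -/
def upperHalf (n : ℕ) : Set (HSp n) := {p | 0 < p.2}

/-- Directional derivative of `f` at `x` in direction `v`. -/
def pdv {n : ℕ} (v : HSp n) (f : HSp n → ℝ) (x : HSp n) : ℝ := fderiv ℝ f x v

/-- The `i`-th horizontal standard basis vector. -/
def eH {n : ℕ} (i : Fin n) : HSp n := (EuclideanSpace.single i 1, 0)

/-- The vertical standard basis vector. -/
def eV {n : ℕ} : HSp n := (0, 1)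

/-- The Laplacian `Δf = ∑ᵢ ∂ᵢᵢ f + ∂_NN f`. -/
def lap {n : ℕ} (f : HSp n → ℝ) (x : HSp n) : ℝ :=
  (∑ i : Fin n, pdv (eH i) (pdv (eH i) f) x) + pdv eV (pdv eV f) x

/-- The Euclidean length `|x|` of a point `x = (x̄, t)`. -/
def rad {n : ℕ} (x : HSp n) : ℝ := Real.sqrt (‖x.1‖ ^ 2 + x.2 ^ 2)

/-- The bubble `W_{λ,ξ}`. -/
def Bub (N : ℕ) (lam : ℝ) (ξ : EuclideanSpace ℝ (Fin (N - 1))) (x : HSp (N - 1)) : ℝ :=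
  lam ^ (((N : ℝ) - 2) / 2) / (‖x.1 - ξ‖ ^ 2 + (x.2 + lam) ^ 2) ^ (((N : ℝ) - 2) / 2)

/-- The trace `w_{λ,ξ}` of the bubble on the boundary. -/
def bub (N : ℕ) (lam : ℝ) (ξ y : EuclideanSpace ℝ (Fin (N - 1))) : ℝ := Bub N lam ξ (y, 0)

namespace AuxPhi
variable {n : ℕ}

def uu (y : HSp n) : ℝ := (∑ j, y.1 j ^ 2) + (y.2 + 1) ^ 2
def QQ (p : Fin n → Fin n → ℝ) (y : HSp n) : ℝ := ∑ j, ∑ k, p j k * y.1 j * y.1 k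
def PP (p : Fin n → Fin n → ℝ) (i : Fin n) (y : HSp n) : ℝ := ∑ j, p i j * y.1 j

lemma uu_eq (y : HSp n) : uu y = ‖y.1‖ ^ 2 + (y.2 + 1) ^ 2 := by
  have h : ‖y.1‖ ^ 2 = ∑ j, y.1 j ^ 2 := by
    rw [EuclideanSpace.norm_eq, Real.sq_sqrt (by positivity)]
    simp [sq_abs]
  rw [uu, h]

lemma uu_nonneg (y : HSp n) : 0 ≤ uu y := by
  have : (0:ℝ) ≤ ∑ j, y.1 j ^ 2 := by positivity
  have h2 : (0:ℝ) ≤ (y.2+1)^2 := sq_nonneg _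
  unfold uu; linarith

/-! ### differentiability -/

lemma diff_coord (j : Fin n) : Differentiable ℝ (fun y : HSp n => y.1 j) :=
  ((EuclideanSpace.proj j).comp (ContinuousLinearMap.fst ℝ (EuclideanSpace ℝ (Fin n)) ℝ)).differentiable

lemma diff_snd' : Differentiable ℝ (fun y : HSp n => y.2) := differentiable_snd

lemma diff_uu : Differentiable ℝ (uu (n := n)) := by
  unfold uu
  exact (Differentiable.fun_sum fun j _ => (diff_coord j).pow 2).add ((diff_snd'.add_const 1).pow 2)

lemma diff_QQ (p : Fin n → Fin n → ℝ) : Differentiable ℝ (QQ p) := by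
  unfold QQ
  exact Differentiable.fun_sum fun j _ => Differentiable.fun_sum fun k _ =>
    (((diff_coord j).const_mul (p j k)).mul (diff_coord k))

lemma diff_PP (p : Fin n → Fin n → ℝ) (i : Fin n) : Differentiable ℝ (PP p i) := by
  unfold PP
  exact Differentiable.fun_sum fun j _ => (diff_coord j).const_mul (p i j)

lemma isOpen_V : IsOpen {y : HSp n | uu y ≠ 0} := isOpen_ne.preimage diff_uu.continuous

/-! ### lines -/

lemma line0 (y v : HSp n) : y + (0:ℝ) • v = y := by simp

lemma lineH_coord (y : HSp n) (t : ℝ) (i j : Fin n) :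
    (y + t • eH i).1 j = y.1 j + t * (if j = i then 1 else 0) := by
  simp [eH, EuclideanSpace.single_apply, mul_comm]

lemma lineH_snd (y : HSp n) (t : ℝ) (i : Fin n) : (y + t • eH i).2 = y.2 := by simp [eH]
lemma lineV_coord (y : HSp n) (t : ℝ) (j : Fin n) : (y + t • (eV : HSp n)).1 j = y.1 j := by
  simp [eV]
lemma lineV_snd (y : HSp n) (t : ℝ) : (y + t • (eV : HSp n)).2 = y.2 + t := by simp [eV]

lemma hAff (a c : ℝ) : HasDerivAt (fun t : ℝ => a + t * c) c 0 := by
  simpa using ((hasDerivAt_id (0:ℝ)).mul_const c).const_add a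

variable {y : HSp n} {i : Fin n} {p : Fin n → Fin n → ℝ}

lemma hd_coordH (j : Fin n) :
    HasDerivAt (fun t : ℝ => (y + t • eH i).1 j) (if j = i then 1 else 0) 0 := by
  simp only [lineH_coord]; exact hAff _ _

lemma hd_uuH : HasDerivAt (fun t : ℝ => uu (y + t • eH i)) (2 * y.1 i) 0 := by
  unfold uu
  simp only [lineH_coord, lineH_snd]
  have h := HasDerivAt.add_const ((y.2 + 1) ^ 2)
    (HasDerivAt.fun_sum (u := Finset.univ)
      (fun j _ => ((hAff (y.1 j) (if j = i then 1 else 0)).fun_pow 2)))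
  refine h.congr_deriv ?_
  simp [Finset.sum_ite_eq', mul_ite]

lemma hd_PPH (j : Fin n) :
    HasDerivAt (fun t : ℝ => PP p j (y + t • eH i)) (p j i) 0 := by
  unfold PP
  simp only [lineH_coord]
  have h := HasDerivAt.fun_sum (u := Finset.univ)
    (fun k _ => (hAff (y.1 k) (if k = i then 1 else 0)).const_mul (p j k))
  refine h.congr_deriv ?_
  simp [Finset.sum_ite_eq', mul_ite]

lemma hd_QQH (hsym : ∀ a b, p a b = p b a) :
    HasDerivAt (fun t : ℝ => QQ p (y + t • eH i)) (2 * PP p i y) 0 := by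
  unfold QQ
  simp only [lineH_coord]
  have h := HasDerivAt.fun_sum (u := Finset.univ) (fun j _ =>
    HasDerivAt.fun_sum (u := Finset.univ) (fun k _ =>
      ((hAff (y.1 j) (if j = i then 1 else 0)).const_mul (p j k)).fun_mul
        (hAff (y.1 k) (if k = i then 1 else 0))))
  refine h.congr_deriv ?_
  unfold PP
  simp only [zero_mul, add_zero, mul_ite, mul_one, mul_zero, ite_self, ite_mul]
  rw [Finset.sum_congr rfl (fun j (_ : j ∈ Finset.univ) => Finset.sum_add_distrib),
    Finset.sum_add_distrib]
  have h1 : ∑ x : Fin n, ∑ x1 : Fin n, (if x = i then p x x1 * y.1 x1 else 0)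
      = ∑ x1, p i x1 * y.1 x1 := by
    rw [Finset.sum_comm]
    simp [Finset.sum_ite_eq']
  have h2 : ∑ x : Fin n, ∑ x1 : Fin n, (if x1 = i then p x x1 * y.1 x else 0)
      = ∑ x, p x i * y.1 x := by
    simp [Finset.sum_ite_eq']
  rw [h1, h2, Finset.mul_sum,
    show ∑ x, p x i * y.1 x = ∑ x, p i x * y.1 x from
      Finset.sum_congr rfl fun x _ => by rw [hsym]]
  rw [← Finset.sum_add_distrib]
  exact Finset.sum_congr rfl fun x _ => by ring

lemma hd_uuV : HasDerivAt (fun t : ℝ => uu (y + t • (eV : HSp n))) (2 * (y.2 + 1)) 0 := by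
  unfold uu
  simp only [lineV_coord, lineV_snd]
  have h2 : HasDerivAt (fun t : ℝ => (y.2 + t + 1) ^ 2) (2 * (y.2 + 1)) 0 := by
    have h : HasDerivAt (fun t : ℝ => y.2 + t + 1) 1 0 := by
      simpa using (((hasDerivAt_id (0:ℝ)).const_add y.2).add_const 1)
    have h' := h.fun_pow 2
    refine h'.congr_deriv ?_
    norm_num
  simpa using h2.const_add (∑ j, y.1 j ^ 2)

lemma hd_QQV : HasDerivAt (fun t : ℝ => QQ p (y + t • (eV : HSp n))) 0 0 := by
  have h : (fun t : ℝ => QQ p (y + t • (eV : HSp n))) = fun _ => QQ p y := by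
    funext t; unfold QQ; simp only [lineV_coord]
  rw [h]; exact hasDerivAt_const _ _

lemma hd_sndV : HasDerivAt (fun t : ℝ => (y + t • (eV : HSp n)).2) 1 0 := by
  simp only [lineV_snd]; simpa using ((hasDerivAt_id (0:ℝ)).const_add y.2)

/-! ### pdv via line derivatives -/

lemma pdv_eq_line {f : HSp n → ℝ} {x v : HSp n} {c : ℝ}
    (hf : DifferentiableAt ℝ f x) (h : HasDerivAt (fun t : ℝ => f (x + t • v)) c 0) :
    pdv v f x = c := by
  have hγ : HasDerivAt (fun t : ℝ => x + t • v) v 0 := by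
    simpa using ((hasDerivAt_id (0:ℝ)).smul_const v).const_add x
  have hf' : HasFDerivAt f (fderiv ℝ f x) (x + (0:ℝ) • v) := by
    rw [line0]; exact hf.hasFDerivAt
  have h2 := hf'.comp_hasDerivAt 0 hγ
  exact (h.unique h2).symm

lemma pdv_pdv_eq {f g : HSp n → ℝ} {x v w : HSp n} {c : ℝ}
    (hfg : pdv v f =ᶠ[𝓝 x] g) (hg : DifferentiableAt ℝ g x)
    (h : HasDerivAt (fun t : ℝ => g (x + t • w)) c 0) :
    pdv w (pdv v f) x = c := by
  show fderiv ℝ (pdv v f) x w = c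
  rw [hfg.fderiv_eq]
  exact pdv_eq_line hg h

lemma hd_rpowH (hy : uu y ≠ 0) (s : ℝ) :
    HasDerivAt (fun t : ℝ => uu (y + t • eH i) ^ s) (2 * y.1 i * (s * uu y ^ (s - 1))) 0 := by
  have h := (hd_uuH (y := y) (i := i)).rpow_const (p := s)
    (by show uu (y + (0:ℝ) • eH i) ≠ 0 ∨ _ ; rw [line0]; exact Or.inl hy)
  simp only [line0] at h
  convert h using 1; ring

lemma hd_rpowV (hy : uu y ≠ 0) (s : ℝ) :
    HasDerivAt (fun t : ℝ => uu (y + t • (eV : HSp n)) ^ s)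
      (2 * (y.2 + 1) * (s * uu y ^ (s - 1))) 0 := by
  have h := (hd_uuV (y := y)).rpow_const (p := s)
    (by show uu (y + (0:ℝ) • (eV : HSp n)) ≠ 0 ∨ _ ; rw [line0]; exact Or.inl hy)
  simp only [line0] at h
  convert h using 1; ring


/-! ### model functions -/

variable (p) in
def TT (c b d r : ℝ) (y : HSp n) : ℝ := c * QQ p y * (b * y.2 + d) * uu y ^ r

variable (p) in
def DH (c b d r : ℝ) (i : Fin n) (y : HSp n) : ℝ :=
  c * (2 * PP p i y) * (b * y.2 + d) * uu y ^ r
    + c * QQ p y * (b * y.2 + d) * (2 * y.1 i * (r * uu y ^ (r - 1)))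

variable (p) in
def DV (c b d r : ℝ) (y : HSp n) : ℝ :=
  c * QQ p y * b * uu y ^ r
    + c * QQ p y * (b * y.2 + d) * (2 * (y.2 + 1) * (r * uu y ^ (r - 1)))

variable (p) in
def SH (c b d r : ℝ) (i : Fin n) (y : HSp n) : ℝ :=
  c * (b * y.2 + d) *
    (2 * p i i * uu y ^ r + 8 * PP p i y * y.1 i * (r * uu y ^ (r - 1))
      + 2 * QQ p y * (r * uu y ^ (r - 1))
      + 4 * (y.1 i) ^ 2 * QQ p y * (r * (r - 1) * uu y ^ (r - 2)))

variable (p) in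
def SV (c b d r : ℝ) (y : HSp n) : ℝ :=
  c * QQ p y *
    (4 * b * (y.2 + 1) * (r * uu y ^ (r - 1))
      + (b * y.2 + d) * (2 * (r * uu y ^ (r - 1))
        + 4 * (y.2 + 1) ^ 2 * (r * (r - 1) * uu y ^ (r - 2))))

variable {c b d r : ℝ}

lemma diff_rpow (hy : uu y ≠ 0) (s : ℝ) :
    DifferentiableAt ℝ (fun y : HSp n => uu y ^ s) y :=
  (diff_uu y).rpow_const (Or.inl hy)

lemma diff_TT (hy : uu y ≠ 0) : DifferentiableAt ℝ (TT p c b d r) y := by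
  unfold TT
  exact ((((diff_QQ p y).const_mul c).mul
    (((diff_snd' y).const_mul b).add_const d)).mul (diff_rpow hy r))

lemma diff_DH (hy : uu y ≠ 0) (i : Fin n) : DifferentiableAt ℝ (DH p c b d r i) y := by
  unfold DH
  have h1 : DifferentiableAt ℝ (fun y : HSp n => b * y.2 + d) y :=
    ((diff_snd' y).const_mul b).add_const d
  exact ((((diff_PP p i y).const_mul 2).const_mul c).mul h1).mul (diff_rpow hy r) |>.add
    ((((diff_QQ p y).const_mul c).mul h1).mul
      (((diff_coord i y).const_mul 2).mul ((diff_rpow hy (r-1)).const_mul r)))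

lemma diff_DV (hy : uu y ≠ 0) : DifferentiableAt ℝ (DV p c b d r) y := by
  unfold DV
  have h1 : DifferentiableAt ℝ (fun y : HSp n => b * y.2 + d) y :=
    ((diff_snd' y).const_mul b).add_const d
  exact (((diff_QQ p y).const_mul c).mul_const b).mul (diff_rpow hy r) |>.add
    ((((diff_QQ p y).const_mul c).mul h1).mul
      ((((diff_snd' y).add_const 1).const_mul 2).mul ((diff_rpow hy (r-1)).const_mul r)))

lemma hd_TT_H (hsym : ∀ a b, p a b = p b a) (hy : uu y ≠ 0) :
    HasDerivAt (fun t : ℝ => TT p c b d r (y + t • eH i)) (DH p c b d r i y) 0 := by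
  unfold TT
  simp only [lineH_snd]
  have h1 := ((hd_QQH (y := y) (i := i) hsym).const_mul c).mul_const (b * y.2 + d)
  have h3 := h1.fun_mul (hd_rpowH (y := y) (i := i) hy r)
  simp only [line0] at h3
  refine h3.congr_deriv ?_
  all_goals unfold DH; all_goals ring

lemma hd_TT_V (hy : uu y ≠ 0) :
    HasDerivAt (fun t : ℝ => TT p c b d r (y + t • (eV : HSp n))) (DV p c b d r y) 0 := by
  unfold TT
  have hL : HasDerivAt (fun t : ℝ => b * (y + t • (eV : HSp n)).2 + d) b 0 := by
    simp only [lineV_snd]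
    simpa using ((((hasDerivAt_id (0:ℝ)).const_add y.2).const_mul b).add_const d)
  have h3 := (((hd_QQV (y := y) (p := p)).const_mul c).fun_mul hL).fun_mul (hd_rpowV (y := y) hy r)
  simp only [line0] at h3
  refine h3.congr_deriv ?_
  all_goals unfold DV; all_goals ring

lemma hd_DH_H (hsym : ∀ a b, p a b = p b a) (hy : uu y ≠ 0) :
    HasDerivAt (fun t : ℝ => DH p c b d r i (y + t • eH i)) (SH p c b d r i y) 0 := by
  unfold DH
  simp only [lineH_snd]
  have h1 := ((((hd_PPH (y := y) (i := i) (p := p) i).const_mul 2).const_mul c).mul_const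
    (b * y.2 + d)).fun_mul (hd_rpowH (y := y) (i := i) hy r)
  have h2 := ((((hd_QQH (y := y) (i := i) hsym).const_mul c).mul_const (b * y.2 + d)).fun_mul
    (((hd_coordH (y := y) (i := i) i).const_mul 2).fun_mul
      ((hd_rpowH (y := y) (i := i) hy (r-1)).const_mul r)))
  have h3 := h1.add h2
  simp only [line0, eq_self_iff_true, if_true] at h3
  refine h3.congr_deriv ?_
  unfold SH
  rw [show r - 1 - 1 = r - 2 by ring]
  ring

lemma hd_DV_V (hy : uu y ≠ 0) :
    HasDerivAt (fun t : ℝ => DV p c b d r (y + t • (eV : HSp n))) (SV p c b d r y) 0 := by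
  unfold DV
  have hL : HasDerivAt (fun t : ℝ => b * (y + t • (eV : HSp n)).2 + d) b 0 := by
    simp only [lineV_snd]
    simpa using ((((hasDerivAt_id (0:ℝ)).const_add y.2).const_mul b).add_const d)
  have hM : HasDerivAt (fun t : ℝ => 2 * ((y + t • (eV : HSp n)).2 + 1)) 2 0 := by
    simp only [lineV_snd]
    have := (((hasDerivAt_id (0:ℝ)).const_add y.2).add_const 1).const_mul (2:ℝ)
    simpa using this
  have h1 := (((hd_QQV (y := y) (p := p)).const_mul c).mul_const b).fun_mul
    (hd_rpowV (y := y) hy r)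
  have h2 := (((hd_QQV (y := y) (p := p)).const_mul c).fun_mul hL).fun_mul
    (hM.fun_mul ((hd_rpowV (y := y) hy (r-1)).const_mul r))
  have h3 := h1.add h2
  simp only [line0] at h3
  refine h3.congr_deriv ?_
  unfold SV
  rw [show r - 1 - 1 = r - 2 by ring]
  ring


/-! ### the bubble -/

def WW (s : ℝ) (y : HSp n) : ℝ := uu y ^ s

def DW (s : ℝ) (j : Fin n) (y : HSp n) : ℝ := 2 * y.1 j * (s * uu y ^ (s - 1))

variable (p) in
def SW (s : ℝ) (i j : Fin n) (y : HSp n) : ℝ :=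
  2 * (if j = i then 1 else 0) * (s * uu y ^ (s - 1))
    + 4 * y.1 j * y.1 i * (s * (s - 1) * uu y ^ (s - 2))

lemma diff_WW (hy : uu y ≠ 0) (s : ℝ) : DifferentiableAt ℝ (WW s) y := diff_rpow hy s

lemma diff_DW (hy : uu y ≠ 0) (s : ℝ) (j : Fin n) : DifferentiableAt ℝ (DW s j) y :=
  ((diff_coord j y).const_mul 2).mul ((diff_rpow hy (s-1)).const_mul s)

lemma hd_WW_H (hy : uu y ≠ 0) (s : ℝ) (j : Fin n) :
    HasDerivAt (fun t : ℝ => WW s (y + t • eH j)) (DW s j y) 0 := by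
  unfold WW DW
  have h := hd_rpowH (y := y) (i := j) hy s
  convert h using 1

lemma hd_DW_H (hy : uu y ≠ 0) (s : ℝ) (j : Fin n) :
    HasDerivAt (fun t : ℝ => DW s j (y + t • eH i)) (SW s i j y) 0 := by
  unfold DW
  have h := ((hd_coordH (y := y) (i := i) j).const_mul (2:ℝ)).fun_mul
    ((hd_rpowH (y := y) (i := i) hy (s-1)).const_mul s)
  simp only [line0] at h
  refine h.congr_deriv ?_
  unfold SW
  rw [show s - 1 - 1 = s - 2 by ring]
  ring

/-! ### summation identities -/

lemma sum_PP_mul (p : Fin n → Fin n → ℝ) (x : HSp n) :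
    ∑ i, PP p i x * x.1 i = QQ p x := by
  unfold PP QQ
  exact Finset.sum_congr rfl fun i _ => by
    rw [Finset.sum_mul]
    exact Finset.sum_congr rfl fun j _ => by ring

lemma sum_sq (x : HSp n) : ∑ i, (x.1 i)^2 = uu x - (x.2+1)^2 := by unfold uu; ring

variable {x : HSp n}

lemma sum_SH (htrace : ∑ i, p i i = 0) :
    ∑ i, SH p c b d r i x =
      c * (b * x.2 + d) * ((8 + 2*(n:ℝ)) * QQ p x * (r * uu x ^ (r-1))
        + 4 * (uu x - (x.2+1)^2) * QQ p x * (r*(r-1)*uu x ^ (r-2))) := by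
  have hrw : ∀ i : Fin n, SH p c b d r i x =
      (c*(b*x.2+d)*2*uu x^r) * p i i
      + ((c*(b*x.2+d)*8*(r*uu x^(r-1))) * (PP p i x * x.1 i)
      + ((c*(b*x.2+d)*4*(r*(r-1)*uu x^(r-2))*QQ p x) * (x.1 i)^2
      + c*(b*x.2+d)*2*QQ p x*(r*uu x^(r-1)))) := fun i => by unfold SH; ring
  rw [Finset.sum_congr rfl fun i _ => hrw i]
  rw [Finset.sum_add_distrib, Finset.sum_add_distrib, Finset.sum_add_distrib,
      ← Finset.mul_sum, ← Finset.mul_sum, ← Finset.mul_sum, htrace, sum_PP_mul, sum_sq]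
  simp only [Finset.sum_const, Finset.card_univ, Fintype.card_fin, nsmul_eq_mul]
  ring

lemma sum_SW (htrace : ∑ i, p i i = 0) {s : ℝ} :
    ∑ i, ∑ j, p i j * SW s i j x = 4 * QQ p x * (s*(s-1)*uu x^(s-2)) := by
  have h1 : ∀ i : Fin n, ∑ j, p i j * SW s i j x
      = (2*(s*uu x^(s-1))) * p i i + ∑ j, (4*(s*(s-1)*uu x^(s-2))) * (p i j * x.1 j * x.1 i) := by
    intro i
    rw [Finset.sum_congr rfl (fun j (_ : j ∈ Finset.univ) =>
      show p i j * SW s i j x = (if j = i then (2*(s*uu x^(s-1))) * p i j else 0)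
          + (4*(s*(s-1)*uu x^(s-2))) * (p i j * x.1 j * x.1 i) from by
        unfold SW; split_ifs with h <;> ring)]
    rw [Finset.sum_add_distrib, Finset.sum_ite_eq' Finset.univ i]
    simp
  rw [Finset.sum_congr rfl fun i _ => h1 i, Finset.sum_add_distrib, ← Finset.mul_sum, htrace,
    mul_zero, zero_add]
  unfold QQ
  simp only [Finset.mul_sum, Finset.sum_mul]
  exact Finset.sum_congr rfl fun i _ => Finset.sum_congr rfl fun j _ => by ring


lemma pdv_pdv_WW (hx : uu x ≠ 0) (s : ℝ) (i j : Fin n) :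
    pdv (eH i) (pdv (eH j) (WW s)) x = SW s i j x := by
  apply pdv_pdv_eq (g := DW s j) _ (diff_DW hx s j) (hd_DW_H hx s j)
  filter_upwards [isOpen_V.mem_nhds hx] with z hz
  exact pdv_eq_line (diff_WW hz s) (hd_WW_H hz s j)

lemma lap_triple {c1 b1 d1 r1 c2 b2 d2 r2 c3 b3 d3 r3 : ℝ}
    (hsym : ∀ a b, p a b = p b a) (hx : uu x ≠ 0) {f : HSp n → ℝ}
    (hf : ∀ y, uu y ≠ 0 → f y =
      TT p c1 b1 d1 r1 y + TT p c2 b2 d2 r2 y + TT p c3 b3 d3 r3 y) :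
    lap f x = (∑ i, (SH p c1 b1 d1 r1 i x + SH p c2 b2 d2 r2 i x + SH p c3 b3 d3 r3 i x))
      + (SV p c1 b1 d1 r1 x + SV p c2 b2 d2 r2 x + SV p c3 b3 d3 r3 x) := by
  have hH : ∀ i : Fin n, pdv (eH i) (pdv (eH i) f) x
      = SH p c1 b1 d1 r1 i x + SH p c2 b2 d2 r2 i x + SH p c3 b3 d3 r3 i x := by
    intro i
    apply pdv_pdv_eq
      (g := fun z => DH p c1 b1 d1 r1 i z + DH p c2 b2 d2 r2 i z + DH p c3 b3 d3 r3 i z)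
      _ (((diff_DH hx i).add (diff_DH hx i)).add (diff_DH hx i))
      (((hd_DH_H hsym hx).add (hd_DH_H hsym hx)).add (hd_DH_H hsym hx))
    filter_upwards [isOpen_V.mem_nhds hx] with z hz
    have hev : f =ᶠ[𝓝 z] fun w =>
        TT p c1 b1 d1 r1 w + TT p c2 b2 d2 r2 w + TT p c3 b3 d3 r3 w := by
      filter_upwards [isOpen_V.mem_nhds hz] with w hw
      exact hf w hw
    show fderiv ℝ f z (eH i) = _
    rw [hev.fderiv_eq]
    exact pdv_eq_line (((diff_TT hz).add (diff_TT hz)).add (diff_TT hz))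
      (((hd_TT_H hsym hz).add (hd_TT_H hsym hz)).add (hd_TT_H hsym hz))
  have hVt : pdv eV (pdv eV f) x
      = SV p c1 b1 d1 r1 x + SV p c2 b2 d2 r2 x + SV p c3 b3 d3 r3 x := by
    apply pdv_pdv_eq
      (g := fun z => DV p c1 b1 d1 r1 z + DV p c2 b2 d2 r2 z + DV p c3 b3 d3 r3 z)
      _ (((diff_DV hx).add (diff_DV hx)).add (diff_DV hx))
      (((hd_DV_V hx).add (hd_DV_V hx)).add (hd_DV_V hx))
    filter_upwards [isOpen_V.mem_nhds hx] with z hz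
    have hev : f =ᶠ[𝓝 z] fun w =>
        TT p c1 b1 d1 r1 w + TT p c2 b2 d2 r2 w + TT p c3 b3 d3 r3 w := by
      filter_upwards [isOpen_V.mem_nhds hz] with w hw
      exact hf w hw
    show fderiv ℝ f z eV = _
    rw [hev.fderiv_eq]
    exact pdv_eq_line (((diff_TT hz).add (diff_TT hz)).add (diff_TT hz))
      (((hd_TT_V hz).add (hd_TT_V hz)).add (hd_TT_V hz))
  unfold lap
  rw [Finset.sum_congr rfl fun i _ => hH i, hVt]

end AuxPhi

/-- the explicit function `Φ` solves `-ΔΦ = 2ε π_ij x_N ∂²_{ij} W_{1,0}`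
in the upper half-space. -/
theorem Phi_solves_interior_equation (N : ℕ) (hN : 4 ≤ N) (ε : ℝ) (hε : 0 < ε)
    (π : Fin (N - 1) → Fin (N - 1) → ℝ)
    (hsym : ∀ i j, π i j = π j i) (htrace : ∑ i, π i i = 0)
    (a₁ a₂ : ℝ) (Φ : HSp (N - 1) → ℝ)
    (hΦ : ∀ x : HSp (N - 1), Φ x =
      ε * (∑ i, ∑ j, π i j * x.1 i * x.1 j) /
          (‖x.1‖ ^ 2 + (x.2 + 1) ^ 2) ^ ((N : ℝ) / 2) *
        (((N : ℝ) - 2) / 2 * (x.2 - 1)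
          + a₁ * (x.2 + 1) / (‖x.1‖ ^ 2 + (x.2 + 1) ^ 2) ^ 2
          + a₂ / (‖x.1‖ ^ 2 + (x.2 + 1) ^ 2))) :
    ∀ x ∈ upperHalf (N - 1), -(lap Φ x) =
      2 * ε * x.2 * ∑ i, ∑ j, π i j * pdv (eH i) (pdv (eH j) (Bub N 1 0)) x := by
  intro x hx
  have hx2 : 0 < x.2 := hx
  set R : ℝ := (N : ℝ) with hRdef
  have hux : 0 < AuxPhi.uu x := by
    have h1 : (0:ℝ) ≤ ∑ j, x.1 j ^ 2 := by positivity
    have h2 : (0:ℝ) < (x.2 + 1) ^ 2 := by positivity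
    unfold AuxPhi.uu; linarith
  have hx0 : AuxPhi.uu x ≠ 0 := ne_of_gt hux
  have hQ : ∀ y : HSp (N-1), (∑ i, ∑ j, π i j * y.1 i * y.1 j) = AuxPhi.QQ π y :=
    fun y => rfl
  -- decompose Φ
  have hf : ∀ y : HSp (N-1), AuxPhi.uu y ≠ 0 →
      Φ y = AuxPhi.TT π (ε * ((R-2)/2)) 1 (-1) (-(R/2)) y
        + AuxPhi.TT π (ε * a₁) 1 1 (-(R/2) - 2) y
        + AuxPhi.TT π (ε * a₂) 0 1 (-(R/2) - 1) y := by
    intro y hy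
    have hy0 : 0 < AuxPhi.uu y := lt_of_le_of_ne (AuxPhi.uu_nonneg y) (Ne.symm hy)
    rw [hΦ y]
    unfold AuxPhi.TT
    rw [hQ y, show ‖y.1‖^2 + (y.2+1)^2 = AuxPhi.uu y from (AuxPhi.uu_eq y).symm]
    have e0 : (ε * AuxPhi.QQ π y) / AuxPhi.uu y ^ (R/2)
        = ε * AuxPhi.QQ π y * AuxPhi.uu y ^ (-(R/2)) := by
      rw [div_eq_mul_inv, ← Real.rpow_neg hy0.le]
    have e1 : AuxPhi.uu y ^ (-(R/2) - 1) = AuxPhi.uu y ^ (-(R/2)) / AuxPhi.uu y := by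
      rw [Real.rpow_sub hy0, Real.rpow_one]
    have e2 : AuxPhi.uu y ^ (-(R/2) - 2)
        = AuxPhi.uu y ^ (-(R/2)) / AuxPhi.uu y / AuxPhi.uu y := by
      rw [show (-(R/2) - 2 : ℝ) = -(R/2) - 1 - 1 by ring, Real.rpow_sub hy0,
        Real.rpow_one, e1]
    rw [e0, e1, e2]
    field_simp
    ring
  rw [AuxPhi.lap_triple hsym hx0 hf]
  -- the bubble
  have hBub : Bub N 1 0 = AuxPhi.WW (n := N - 1) (-((R-2)/2)) := by
    funext y
    unfold Bub AuxPhi.WW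
    rw [sub_zero, Real.one_rpow,
      show ‖y.1‖^2 + (y.2+1)^2 = AuxPhi.uu y from (AuxPhi.uu_eq y).symm,
      Real.rpow_neg (AuxPhi.uu_nonneg y), inv_eq_one_div]
  rw [hBub]
  simp only [AuxPhi.pdv_pdv_WW hx0]
  rw [AuxPhi.sum_SW htrace]
  rw [Finset.sum_add_distrib, Finset.sum_add_distrib, AuxPhi.sum_SH htrace,
    AuxPhi.sum_SH htrace, AuxPhi.sum_SH htrace]
  unfold AuxPhi.SV
  have hcard : ((N - 1 : ℕ) : ℝ) = R - 1 := by
    rw [Nat.cast_sub (by omega : 1 ≤ N), Nat.cast_one]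
  rw [hcard]
  -- normalize exponents
  rw [show (-(R/2) - 2 - 1 : ℝ) = -(R/2) - 3 by ring,
    show (-(R/2) - 2 - 2 : ℝ) = -(R/2) - 4 by ring,
    show (-(R/2) - 1 - 1 : ℝ) = -(R/2) - 2 by ring,
    show (-(R/2) - 1 - 2 : ℝ) = -(R/2) - 3 by ring,
    show (-((R-2)/2) - 1 : ℝ) = -(R/2) by ring,
    show (-((R-2)/2) - 2 : ℝ) = -(R/2) - 1 by ring]
  have k1 : AuxPhi.uu x ^ (-(R/2) - 1) = AuxPhi.uu x ^ (-(R/2)) / AuxPhi.uu x := by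
    rw [Real.rpow_sub hux, Real.rpow_one]
  have k2 : AuxPhi.uu x ^ (-(R/2) - 2)
      = AuxPhi.uu x ^ (-(R/2)) / AuxPhi.uu x / AuxPhi.uu x := by
    rw [show (-(R/2) - 2 : ℝ) = -(R/2) - 1 - 1 by ring, Real.rpow_sub hux, Real.rpow_one, k1]
  have k3 : AuxPhi.uu x ^ (-(R/2) - 3)
      = AuxPhi.uu x ^ (-(R/2)) / AuxPhi.uu x / AuxPhi.uu x / AuxPhi.uu x := by
    rw [show (-(R/2) - 3 : ℝ) = -(R/2) - 2 - 1 by ring, Real.rpow_sub hux, Real.rpow_one, k2]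
  have k4 : AuxPhi.uu x ^ (-(R/2) - 4)
      = AuxPhi.uu x ^ (-(R/2)) / AuxPhi.uu x / AuxPhi.uu x / AuxPhi.uu x / AuxPhi.uu x := by
    rw [show (-(R/2) - 4 : ℝ) = -(R/2) - 3 - 1 by ring, Real.rpow_sub hux, Real.rpow_one, k3]
  rw [k4, k3, k2, k1]
  field_simp
  ring
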